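/- arXiv:1710.07145 — 2 statements merged into one kernel-verified Lean document; each statement's English description precedes it below -/
import Mathlib

section
/- For any positive real r and any curve (rectifiable trajectory) of length x in the Euclidean plane, the set of points at distance at most r from some point of the trajectory has area at most 2rx + πr². -/
open MeasureTheory Real Metric Set

noncomputable section NbhdAux

private def nbhdIso : ℂ ≃ₗᵢ[ℝ] EuclideanSpace ℝ (Fin 2) :=
  Complex.isometryOfOrthonormal (EuclideanSpace.basisFun (Fin 2) ℝ)

private lemma strip_volume' (R d : ℝ) (hd : 0 ≤ d) :
    volume {p : ℝ × ℝ | p.2 ∈ Icc (-R) R ∧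
      p.1 ∈ Icc (Real.sqrt (R^2 - p.2^2)) (Real.sqrt (R^2 - p.2^2) + d)}
      ≤ ENNReal.ofReal (2 * R * d) := by
  set g : ℝ → ℝ := fun y => Real.sqrt (R^2 - y^2) with hg
  have hgc : Continuous g := (continuous_const.sub (continuous_pow 2)).sqrt
  set T : Set (ℝ × ℝ) := {p : ℝ × ℝ | p.2 ∈ Icc (-R) R ∧
      p.1 ∈ Icc (g p.2) (g p.2 + d)} with hT
  have hTm : MeasurableSet T := by
    have h1 : MeasurableSet {p : ℝ × ℝ | -R ≤ p.2} :=
      measurableSet_le measurable_const measurable_snd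
    have h2 : MeasurableSet {p : ℝ × ℝ | p.2 ≤ R} :=
      measurableSet_le measurable_snd measurable_const
    have h3 : MeasurableSet {p : ℝ × ℝ | g p.2 ≤ p.1} :=
      measurableSet_le (hgc.measurable.comp measurable_snd) measurable_fst
    have h4 : MeasurableSet {p : ℝ × ℝ | p.1 ≤ g p.2 + d} :=
      measurableSet_le measurable_fst ((hgc.measurable.comp measurable_snd).add measurable_const)
    have : T = ({p : ℝ × ℝ | -R ≤ p.2} ∩ {p : ℝ × ℝ | p.2 ≤ R}) ∩
        ({p : ℝ × ℝ | g p.2 ≤ p.1} ∩ {p : ℝ × ℝ | p.1 ≤ g p.2 + d}) := by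
      ext p; simp only [hT, Set.mem_setOf_eq, Set.mem_Icc, Set.mem_inter_iff]
    rw [this]
    exact ((h1.inter h2).inter (h3.inter h4))
  rw [Measure.volume_eq_prod, Measure.prod_apply_symm hTm]
  have hbound : ∀ y : ℝ, volume ((fun x => (x, y)) ⁻¹' T)
      ≤ (Icc (-R) R).indicator (fun _ => ENNReal.ofReal d) y := by
    intro y
    by_cases hy : y ∈ Icc (-R) R
    · obtain ⟨hy1, hy2⟩ := hy
      have hy : y ∈ Icc (-R) R := ⟨hy1, hy2⟩
      have : ((fun x => (x, y)) ⁻¹' T) = Icc (g y) (g y + d) := by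
        ext x
        simp only [hT, Set.mem_preimage, Set.mem_setOf_eq, Set.mem_Icc]
        tauto
      rw [this, Set.indicator_of_mem hy, Real.volume_Icc]
      simp
    · have : ((fun x => (x, y)) ⁻¹' T) = ∅ := by
        ext x
        simp only [hT, Set.mem_preimage, Set.mem_setOf_eq, Set.mem_empty_iff_false, iff_false,
          not_and]
        intro h1 _; exact hy h1
      rw [this, Set.indicator_of_notMem hy]
      simp
  calc ∫⁻ y, volume ((fun x => (x, y)) ⁻¹' T)
      ≤ ∫⁻ y, (Icc (-R) R).indicator (fun _ => ENNReal.ofReal d) y := lintegral_mono hbound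
    _ = ENNReal.ofReal d * volume (Icc (-R) R) := by
        rw [lintegral_indicator_const measurableSet_Icc]
    _ ≤ ENNReal.ofReal (2 * R * d) := by
        rw [Real.volume_Icc, ← ENNReal.ofReal_mul hd]
        apply ENNReal.ofReal_le_ofReal; nlinarith

private lemma lune_complex'(R : ℝ) (c₁ c₂ : ℂ) :
    volume (closedBall c₂ R \ closedBall c₁ R) ≤ ENNReal.ofReal (2 * R * dist c₁ c₂) := by
  by_cases hcc : c₁ = c₂
  · subst hcc; simp
  have hd : 0 < dist c₁ c₂ := dist_pos.2 hcc
  set d : ℝ := dist c₁ c₂ with hdd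
  -- normalize: rotate and translate
  set u : ℂ := (c₂ - c₁) / (d : ℂ) with hu
  have hdne : (d : ℂ) ≠ 0 := by
    simpa using hd.ne'
  have habs : ‖c₂ - c₁‖ = d := by
    rw [hdd, dist_comm, Complex.dist_eq]
  have hnu : ‖u‖ = 1 := by
    rw [hu, norm_div, habs, Complex.norm_real, Real.norm_eq_abs,
      abs_of_pos hd, div_self hd.ne']
  have hau : ‖u‖ = 1 := by exact hnu
  set uc : Circle := ⟨u, by exact mem_sphere_zero_iff_norm.mpr hnu⟩ with huc
  set φ : ℂ → ℂ := fun z => u * z + c₁ with hφ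
  have hud : u * (d : ℂ) = c₂ - c₁ := by
    rw [hu, div_mul_cancel₀ _ hdne]
  have hmp : MeasurePreserving φ volume volume := by
    have hfun : ⇑(rotation uc) = fun z : ℂ => u * z := by
      funext z; exact rotation_apply uc z
    have h1 : MeasurePreserving (fun z : ℂ => u * z) volume volume :=
      hfun ▸ (rotation uc).measurePreserving
    exact (measurePreserving_add_right volume c₁).comp h1
  have hpre : φ ⁻¹' (closedBall c₂ R \ closedBall c₁ R)
      = closedBall (d : ℂ) R \ closedBall 0 R := by
    ext z
    have e2 : dist (φ z) c₂ = dist z (d : ℂ) := by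
      rw [hφ, Complex.dist_eq, Complex.dist_eq]
      have : u * z + c₁ - c₂ = u * (z - (d:ℂ)) := by rw [mul_sub, hud]; ring
      rw [this, norm_mul, hau, one_mul]
    have e1 : dist (φ z) c₁ = dist z 0 := by
      rw [hφ, Complex.dist_eq, Complex.dist_eq]
      simp only [add_sub_cancel_right, sub_zero, norm_mul]
      rw [hau, one_mul]
    simp [Set.mem_diff, mem_closedBall, e1, e2]
  have hmeas : MeasurableSet (closedBall c₂ R \ closedBall c₁ R) :=
    measurableSet_closedBall.diff measurableSet_closedBall
  rw [← hmp.measure_preimage hmeas.nullMeasurableSet, hpre]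
  -- now containment in the strip
  clear hpre hmp
  set T : Set (ℝ × ℝ) := {p : ℝ × ℝ | p.2 ∈ Icc (-R) R ∧
      p.1 ∈ Icc (Real.sqrt (R^2 - p.2^2)) (Real.sqrt (R^2 - p.2^2) + d)} with hT
  have hTm : MeasurableSet T := by
    have hgc : Continuous (fun y : ℝ => Real.sqrt (R^2 - y^2)) :=
      (continuous_const.sub (continuous_pow 2)).sqrt
    have h1 : MeasurableSet {p : ℝ × ℝ | -R ≤ p.2} :=
      measurableSet_le measurable_const measurable_snd
    have h2 : MeasurableSet {p : ℝ × ℝ | p.2 ≤ R} :=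
      measurableSet_le measurable_snd measurable_const
    have h3 : MeasurableSet {p : ℝ × ℝ | Real.sqrt (R^2 - p.2^2) ≤ p.1} :=
      measurableSet_le (hgc.measurable.comp measurable_snd) measurable_fst
    have h4 : MeasurableSet {p : ℝ × ℝ | p.1 ≤ Real.sqrt (R^2 - p.2^2) + d} :=
      measurableSet_le measurable_fst ((hgc.measurable.comp measurable_snd).add measurable_const)
    have : T = ({p : ℝ × ℝ | -R ≤ p.2} ∩ {p : ℝ × ℝ | p.2 ≤ R}) ∩
        ({p : ℝ × ℝ | Real.sqrt (R^2 - p.2^2) ≤ p.1} ∩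
          {p : ℝ × ℝ | p.1 ≤ Real.sqrt (R^2 - p.2^2) + d}) := by
      ext p; simp only [hT, Set.mem_setOf_eq, Set.mem_Icc, Set.mem_inter_iff]
    rw [this]
    exact ((h1.inter h2).inter (h3.inter h4))
  have hsub : closedBall (d : ℂ) R \ closedBall 0 R ⊆
      Complex.measurableEquivRealProd ⁻¹' T := by
    rintro z ⟨hz2, hz1⟩
    refine Set.mem_preimage.2 ?_
    rw [show Complex.measurableEquivRealProd z = (z.re, z.im) from rfl]
    rw [mem_closedBall, Complex.dist_eq] at hz2
    rw [mem_closedBall, Complex.dist_eq, not_le, sub_zero] at hz1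
    have him : (z - (d:ℂ)).im = z.im := by simp
    have habs_im : |z.im| ≤ R := by
      calc |z.im| = |(z - (d:ℂ)).im| := by rw [him]
        _ ≤ ‖z - (d:ℂ)‖ := Complex.abs_im_le_norm _
        _ ≤ R := hz2
    have hR0 : 0 ≤ R := le_trans (abs_nonneg _) habs_im
    have h1 : (z.re - d)^2 + z.im^2 ≤ R^2 := by
      have := Complex.sq_norm (z - (d:ℂ))
      have h2 : ‖z - (d:ℂ)‖ ^ 2 ≤ R ^ 2 := by
        apply pow_le_pow_left₀ (norm_nonneg _) hz2
      rw [this, Complex.normSq_apply] at h2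
      simp only [Complex.sub_re, Complex.ofReal_re, Complex.sub_im, Complex.ofReal_im,
        sub_zero] at h2
      nlinarith [h2]
    have h2 : R^2 < z.re^2 + z.im^2 := by
      have h3 : R ^ 2 < ‖z‖ ^ 2 := by
        apply pow_lt_pow_left₀ hz1 hR0; norm_num
      rw [Complex.sq_norm, Complex.normSq_apply] at h3
      nlinarith [h3]
    have hre : d / 2 < z.re := by nlinarith
    have him2 : 0 ≤ R^2 - z.im^2 := by nlinarith [abs_le.1 habs_im]
    constructor
    · exact abs_le.1 habs_im
    constructor
    · calc Real.sqrt (R^2 - z.im^2) ≤ Real.sqrt (z.re^2) := by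
            apply Real.sqrt_le_sqrt; nlinarith
        _ = z.re := by rw [Real.sqrt_sq (by nlinarith)]
    · have : z.re - d ≤ Real.sqrt (R^2 - z.im^2) := by
        calc z.re - d ≤ |z.re - d| := le_abs_self _
          _ = Real.sqrt ((z.re - d)^2) := (Real.sqrt_sq_eq_abs _).symm
          _ ≤ Real.sqrt (R^2 - z.im^2) := by apply Real.sqrt_le_sqrt; nlinarith
      linarith
  calc volume (closedBall (d : ℂ) R \ closedBall 0 R)
      ≤ volume (Complex.measurableEquivRealProd ⁻¹' T) := measure_mono hsub
    _ = volume T := by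
        apply Complex.volume_preserving_equiv_real_prod.measure_preimage
        exact hTm.nullMeasurableSet
    _ ≤ ENNReal.ofReal (2 * R * d) := strip_volume' R d hd.le


private lemma lune_euclid (R : ℝ) (c₁ c₂ : EuclideanSpace ℝ (Fin 2)) :
    volume (closedBall c₂ R \ closedBall c₁ R) ≤ ENNReal.ofReal (2 * R * dist c₁ c₂) := by
  have hmp := nbhdIso.measurePreserving
  have hpre : ⇑nbhdIso ⁻¹' (closedBall c₂ R \ closedBall c₁ R)
      = closedBall (nbhdIso.symm c₂) R \ closedBall (nbhdIso.symm c₁) R := by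
    ext z
    have h1 : dist (nbhdIso z) c₁ = dist z (nbhdIso.symm c₁) := by
      conv_lhs => rw [← nbhdIso.apply_symm_apply c₁]
      exact nbhdIso.dist_map z _
    have h2 : dist (nbhdIso z) c₂ = dist z (nbhdIso.symm c₂) := by
      conv_lhs => rw [← nbhdIso.apply_symm_apply c₂]
      exact nbhdIso.dist_map z _
    simp [Set.mem_diff, mem_closedBall, h1, h2]
  have hmeas : MeasurableSet (closedBall c₂ R \ closedBall c₁ R) :=
    measurableSet_closedBall.diff measurableSet_closedBall
  rw [← hmp.measure_preimage hmeas.nullMeasurableSet, hpre]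
  have hdist : dist (nbhdIso.symm c₁) (nbhdIso.symm c₂) = dist c₁ c₂ :=
    nbhdIso.symm.dist_map c₁ c₂
  rw [← hdist]
  exact lune_complex' R _ _

private lemma ball_euclid (R : ℝ) (hR : 0 ≤ R) (c : EuclideanSpace ℝ (Fin 2)) :
    volume (closedBall c R) ≤ ENNReal.ofReal (π * R ^ 2) := by
  have hmp := nbhdIso.measurePreserving
  have hpre : ⇑nbhdIso ⁻¹' closedBall c R = closedBall (nbhdIso.symm c) R := by
    ext z
    have h1 : dist (nbhdIso z) c = dist z (nbhdIso.symm c) := by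
      conv_lhs => rw [← nbhdIso.apply_symm_apply c]
      exact nbhdIso.dist_map z _
    simp [mem_closedBall, h1]
  rw [← hmp.measure_preimage measurableSet_closedBall.nullMeasurableSet, hpre,
    Complex.volume_closedBall]
  have hpi : (NNReal.pi : ENNReal) = ENNReal.ofReal π := by
    rw [← NNReal.coe_real_pi, ENNReal.ofReal_coe_nnreal]
  rw [← ENNReal.ofReal_pow hR, hpi, ← ENNReal.ofReal_mul (by positivity)]
  exact le_of_eq (by rw [mul_comm])

private lemma union_telescope {α : Type*} (B : ℕ → Set α) (N : ℕ) :
    (⋃ i ∈ Finset.range (N+1), B i) ⊆ B 0 ∪ ⋃ i ∈ Finset.range N, (B (i+1) \ B i) := by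
  intro z hz
  simp only [Set.mem_iUnion, Finset.mem_range] at hz
  obtain ⟨i, hiN, hi⟩ := hz
  classical
  have hex : ∃ j, z ∈ B j := ⟨i, hi⟩
  set j := Nat.find hex with hj
  have hjz : z ∈ B j := Nat.find_spec hex
  have hji : j ≤ i := Nat.find_min' hex hi
  rcases Nat.eq_zero_or_eq_succ_pred j with h0 | hsucc
  · left; rwa [h0] at hjz
  · right
    set k := j - 1 with hk
    have hjk : j = k + 1 := hsucc
    have hzk : z ∉ B k := Nat.find_min hex (by omega)
    simp only [Set.mem_iUnion, Finset.mem_range]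
    exact ⟨k, by omega, by rw [← hjk]; exact ⟨hjz, hzk⟩⟩

end NbhdAux

/-- The r-neighborhood of a rectifiable curve of length x (parametrized by arc length,
i.e. a 1-Lipschitz map on [0,x]) in the Euclidean plane has area at most 2rx + πr². -/
theorem neighborhood_area_le (r x : ℝ) (hr : 0 < r) (hx : 0 ≤ x)
    (γ : ℝ → EuclideanSpace ℝ (Fin 2)) (hγ : LipschitzOnWith 1 γ (Set.Icc 0 x)) :
    volume {p : EuclideanSpace ℝ (Fin 2) | ∃ t ∈ Set.Icc (0:ℝ) x, dist p (γ t) ≤ r}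
      ≤ ENNReal.ofReal (2 * r * x + π * r ^ 2) := by
  set T := {p : EuclideanSpace ℝ (Fin 2) | ∃ t ∈ Set.Icc (0:ℝ) x, dist p (γ t) ≤ r} with hTdef
  have key : ∀ n : ℕ, volume T ≤
      ENNReal.ofReal (π * (r + x/((n:ℝ)+1))^2 + 2*(r + x/((n:ℝ)+1))*x) := by
    intro n
    set N : ℕ := n + 1 with hNdef
    have hNc : ((N:ℕ):ℝ) = (n:ℝ) + 1 := by push_cast [hNdef]; ring
    have hN : (0:ℝ) < (N:ℝ) := by rw [hNc]; positivity
    set R : ℝ := r + x / (N:ℝ) with hRdef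
    have hxN : 0 ≤ x / (N:ℝ) := by positivity
    have hR0 : 0 < R := by rw [hRdef]; positivity
    set B : ℕ → Set (EuclideanSpace ℝ (Fin 2)) :=
      fun i => closedBall (γ ((i:ℝ) * x / (N:ℝ))) R with hB
    have hti : ∀ i : ℕ, i ≤ N → ((i:ℝ) * x / (N:ℝ)) ∈ Set.Icc (0:ℝ) x := by
      intro i hi
      have hiR : (i:ℝ) ≤ (N:ℝ) := by exact_mod_cast hi
      constructor
      · positivity
      · rw [div_le_iff₀ hN]; nlinarith
    have hstep : ∀ i : ℕ, i < N →
        dist (γ ((i:ℝ) * x / (N:ℝ))) (γ (((i:ℝ)+1) * x / (N:ℝ))) ≤ x / (N:ℝ) := by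
      intro i hi
      have h1 := hti i hi.le
      have h2 : (((i:ℝ)+1) * x / (N:ℝ)) ∈ Set.Icc (0:ℝ) x := by
        have := hti (i+1) hi
        rwa [Nat.cast_add, Nat.cast_one] at this
      have := hγ.dist_le_mul _ h1 _ h2
      rw [Real.dist_eq] at this
      calc dist (γ ((i:ℝ) * x / (N:ℝ))) (γ (((i:ℝ)+1) * x / (N:ℝ)))
          ≤ ((1:NNReal):ℝ) * |(i:ℝ) * x / (N:ℝ) - ((i:ℝ)+1) * x / (N:ℝ)| := this
        _ = |(i:ℝ) * x / (N:ℝ) - ((i:ℝ)+1) * x / (N:ℝ)| := by norm_num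
        _ = x / (N:ℝ) := by
            have he : (i:ℝ) * x / (N:ℝ) - ((i:ℝ)+1) * x / (N:ℝ) = -(x / (N:ℝ)) := by ring
            rw [he, abs_neg, abs_of_nonneg hxN]
    have cover : T ⊆ ⋃ i ∈ Finset.range (N+1), B i := by
      rintro p ⟨t, ht, hpt⟩
      by_cases hx0 : x = 0
      · have ht0 : t = 0 := by
          rw [hx0] at ht; exact le_antisymm ht.2 ht.1
        simp only [Set.mem_iUnion, Finset.mem_range]
        refine ⟨0, by omega, ?_⟩
        simp only [hB, mem_closedBall]
        have he : ((0:ℕ):ℝ) * x / (N:ℝ) = 0 := by simp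
        rw [he]
        calc dist p (γ 0) = dist p (γ t) := by rw [ht0]
          _ ≤ r := hpt
          _ ≤ R := by rw [hRdef]; linarith
      · have hx' : 0 < x := lt_of_le_of_ne hx (Ne.symm hx0)
        set s : ℝ := t * (N:ℝ) / x with hs
        have hs0 : 0 ≤ s := by
          apply div_nonneg _ hx'.le
          exact mul_nonneg ht.1 hN.le
        have hsN : s ≤ (N:ℝ) := by
          rw [hs, div_le_iff₀ hx']; nlinarith [ht.2]
        set i : ℕ := ⌊s⌋₊ with hi
        have hiN : i ≤ N := by
          have := Nat.floor_le_floor hsN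
          rwa [Nat.floor_natCast] at this
        have hfl : (i:ℝ) ≤ s := Nat.floor_le hs0
        have hfl2 : s < (i:ℝ) + 1 := Nat.lt_floor_add_one s
        have hts : t = s * x / (N:ℝ) := by
          rw [hs]; field_simp
        have hdiff : |t - (i:ℝ) * x / (N:ℝ)| ≤ x / (N:ℝ) := by
          have he : t - (i:ℝ) * x / (N:ℝ) = (s - (i:ℝ)) * (x / (N:ℝ)) := by
            rw [hts]; ring
          rw [he, abs_of_nonneg (mul_nonneg (by linarith) hxN)]
          calc (s - (i:ℝ)) * (x / (N:ℝ)) ≤ 1 * (x / (N:ℝ)) := by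
                apply mul_le_mul_of_nonneg_right _ hxN; linarith
            _ = x / (N:ℝ) := one_mul _
        have hmem : ((i:ℝ) * x / (N:ℝ)) ∈ Set.Icc (0:ℝ) x := hti i hiN
        have hd2 : dist (γ t) (γ ((i:ℝ) * x / (N:ℝ))) ≤ x / (N:ℝ) := by
          have := hγ.dist_le_mul _ ht _ hmem
          rw [Real.dist_eq] at this
          calc dist (γ t) (γ ((i:ℝ) * x / (N:ℝ)))
              ≤ ((1:NNReal):ℝ) * |t - (i:ℝ) * x / (N:ℝ)| := this
            _ = |t - (i:ℝ) * x / (N:ℝ)| := by norm_num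
            _ ≤ x / (N:ℝ) := hdiff
        simp only [Set.mem_iUnion, Finset.mem_range]
        refine ⟨i, by omega, ?_⟩
        simp only [hB, mem_closedBall]
        calc dist p (γ ((i:ℝ) * x / (N:ℝ)))
            ≤ dist p (γ t) + dist (γ t) (γ ((i:ℝ) * x / (N:ℝ))) := dist_triangle _ _ _
          _ ≤ r + x / (N:ℝ) := add_le_add hpt hd2
          _ = R := hRdef.symm
    have step2 : volume T ≤ volume (B 0) + ∑ i ∈ Finset.range N, volume (B (i+1) \ B i) := by
      calc volume T ≤ volume (B 0 ∪ ⋃ i ∈ Finset.range N, (B (i+1) \ B i)) :=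
            measure_mono (cover.trans (union_telescope B N))
        _ ≤ volume (B 0) + volume (⋃ i ∈ Finset.range N, (B (i+1) \ B i)) :=
            measure_union_le _ _
        _ ≤ volume (B 0) + ∑ i ∈ Finset.range N, volume (B (i+1) \ B i) := by
            gcongr
            exact measure_biUnion_finset_le _ _
    have step3 : ∀ i ∈ Finset.range N, volume (B (i+1) \ B i)
        ≤ ENNReal.ofReal (2 * R * (x / (N:ℝ))) := by
      intro i hi
      rw [Finset.mem_range] at hi
      calc volume (B (i+1) \ B i)
          ≤ ENNReal.ofReal (2 * R * dist (γ ((i:ℝ) * x / (N:ℝ)))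
              (γ ((((i:ℕ)+1:ℕ):ℝ) * x / (N:ℝ)))) := lune_euclid _ _ _
        _ ≤ ENNReal.ofReal (2 * R * (x / (N:ℝ))) := by
            apply ENNReal.ofReal_le_ofReal
            have hdd : dist (γ ((i:ℝ) * x / (N:ℝ))) (γ ((((i:ℕ)+1:ℕ):ℝ) * x / (N:ℝ)))
                ≤ x / (N:ℝ) := by
              have := hstep i hi
              push_cast
              push_cast at this
              exact this
            nlinarith [dist_nonneg (x := γ ((i:ℝ) * x / (N:ℝ)))
              (y := γ ((((i:ℕ)+1:ℕ):ℝ) * x / (N:ℝ)))]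
    have hsum : ∑ i ∈ Finset.range N, volume (B (i+1) \ B i)
        ≤ ENNReal.ofReal (2 * R * x) := by
      calc ∑ i ∈ Finset.range N, volume (B (i+1) \ B i)
          ≤ ∑ _i ∈ Finset.range N, ENNReal.ofReal (2 * R * (x / (N:ℝ))) :=
            Finset.sum_le_sum step3
        _ = (N:ENNReal) * ENNReal.ofReal (2 * R * (x / (N:ℝ))) := by
            rw [Finset.sum_const, Finset.card_range, nsmul_eq_mul]
        _ = ENNReal.ofReal ((N:ℝ) * (2 * R * (x / (N:ℝ)))) := by
            conv_rhs => rw [ENNReal.ofReal_mul (le_of_lt hN), ENNReal.ofReal_natCast]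
        _ = ENNReal.ofReal (2 * R * x) := by
            congr 1; field_simp
    have hball : volume (B 0) ≤ ENNReal.ofReal (π * R^2) := ball_euclid R hR0.le _
    calc volume T ≤ volume (B 0) + ∑ i ∈ Finset.range N, volume (B (i+1) \ B i) := step2
      _ ≤ ENNReal.ofReal (π * R^2) + ENNReal.ofReal (2 * R * x) := add_le_add hball hsum
      _ = ENNReal.ofReal (π * R^2 + 2 * R * x) := by
          rw [← ENNReal.ofReal_add (by positivity) (by positivity)]
      _ = ENNReal.ofReal (π * (r + x/((n:ℝ)+1))^2 + 2*(r + x/((n:ℝ)+1))*x) := by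
          rw [hRdef, hNc]
  have h0 : Filter.Tendsto (fun n : ℕ => x/((n:ℝ)+1)) Filter.atTop (nhds 0) := by
    have h1 := tendsto_one_div_add_atTop_nhds_zero_nat.const_mul x
    simp only [mul_zero] at h1
    convert h1 using 2 with n
    field_simp
  have hr' : Filter.Tendsto (fun n : ℕ => r + x/((n:ℝ)+1)) Filter.atTop (nhds r) := by
    simpa using h0.const_add r
  have h1 : Filter.Tendsto (fun n : ℕ => π * (r + x/((n:ℝ)+1))^2 + 2*(r + x/((n:ℝ)+1))*x)
      Filter.atTop (nhds (2 * r * x + π * r ^ 2)) := by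
    have h2 := ((hr'.pow 2).const_mul π).add ((hr'.const_mul 2).mul_const x)
    convert h2 using 2
    ring
  have hlim : Filter.Tendsto
      (fun n : ℕ => ENNReal.ofReal (π * (r + x/((n:ℝ)+1))^2 + 2*(r + x/((n:ℝ)+1))*x))
      Filter.atTop (nhds (ENNReal.ofReal (2 * r * x + π * r ^ 2))) :=
    (ENNReal.continuous_ofReal.tendsto _).comp h1
  exact ge_of_tendsto' hlim key
end

section
/- For every point p of the axis-aligned square of side 2k·2^{-j} centered at the origin, there exists a point on the spiral trajectory S(k,j) at distance less than 2^{-j} from p. -/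
/-- Direction of the n-th move of the spiral: E, S, W, N cyclically, two moves per length. -/
noncomputable def spiralDir (n : ℕ) : ℝ × ℝ :=
  if n % 4 = 0 then (1, 0) else if n % 4 = 1 then (0, -1)
  else if n % 4 = 2 then (-1, 0) else (0, 1)

/-- Vertices of the spiral S(·,j): the n-th move has length (⌊n/2⌋+1)·2^{-j}. -/
noncomputable def spiralVertex (j : ℕ) : ℕ → ℝ × ℝ
  | 0 => (0, 0)
  | n + 1 => spiralVertex j n + ((2:ℝ) ^ (-(j:ℤ)) * ((n / 2 : ℕ) + 1)) • spiralDir n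

/-- The spiral S(k,j) as a subset of the plane: the union of its 4k+4 segments. -/
noncomputable def spiralSet (k j : ℕ) : Set (ℝ × ℝ) :=
  ⋃ n ∈ Finset.range (4 * k + 4), segment ℝ (spiralVertex j n) (spiralVertex j (n + 1))

private lemma vertex_succ (j n : ℕ) :
    spiralVertex j (n+1) = spiralVertex j n + ((2:ℝ) ^ (-(j:ℤ)) * ((n / 2 : ℕ) + 1)) • spiralDir n := rfl

private lemma vertex_four (j m : ℕ) :
    spiralVertex j (4*m) = ((2:ℝ)^(-(j:ℤ)) * (-(m:ℝ)), (2:ℝ)^(-(j:ℤ)) * m) ∧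
    spiralVertex j (4*m+1) = ((2:ℝ)^(-(j:ℤ)) * ((m:ℝ)+1), (2:ℝ)^(-(j:ℤ)) * m) ∧
    spiralVertex j (4*m+2) = ((2:ℝ)^(-(j:ℤ)) * ((m:ℝ)+1), (2:ℝ)^(-(j:ℤ)) * (-((m:ℝ)+1))) ∧
    spiralVertex j (4*m+3) = ((2:ℝ)^(-(j:ℤ)) * (-((m:ℝ)+1)), (2:ℝ)^(-(j:ℤ)) * (-((m:ℝ)+1))) ∧
    spiralVertex j (4*m+4) = ((2:ℝ)^(-(j:ℤ)) * (-((m:ℝ)+1)), (2:ℝ)^(-(j:ℤ)) * ((m:ℝ)+1)) := by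
  induction m with
  | zero =>
    have e0 : spiralVertex j 0 = ((0:ℝ), (0:ℝ)) := rfl
    have e1 : spiralVertex j 1 = ((2:ℝ)^(-(j:ℤ)) * 1, (2:ℝ)^(-(j:ℤ)) * 0) := by
      rw [show spiralVertex j 1 = _ from vertex_succ j 0, e0]
      simp [spiralDir, Prod.ext_iff]
    have e2 : spiralVertex j 2 = ((2:ℝ)^(-(j:ℤ)) * 1, (2:ℝ)^(-(j:ℤ)) * (-1)) := by
      rw [show spiralVertex j 2 = _ from vertex_succ j 1, e1]
      simp [spiralDir, Prod.ext_iff]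
      all_goals ring
    have e3 : spiralVertex j 3 = ((2:ℝ)^(-(j:ℤ)) * (-1), (2:ℝ)^(-(j:ℤ)) * (-1)) := by
      rw [show spiralVertex j 3 = _ from vertex_succ j 2, e2]
      simp [spiralDir, Prod.ext_iff]
      all_goals ring
    have e4 : spiralVertex j 4 = ((2:ℝ)^(-(j:ℤ)) * (-1), (2:ℝ)^(-(j:ℤ)) * 1) := by
      rw [show spiralVertex j 4 = _ from vertex_succ j 3, e3]
      simp [spiralDir, Prod.ext_iff]
      all_goals ring
    simp only [Nat.mul_zero, Nat.zero_add, Nat.cast_zero]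
    exact ⟨by simpa using e0, by simpa using e1, by simpa using e2, by simpa using e3,
      by simpa using e4⟩
  | succ m ih =>
    obtain ⟨-, -, -, -, h4⟩ := ih
    have e1 : spiralVertex j (4*m+5)
        = ((2:ℝ)^(-(j:ℤ)) * ((m:ℝ)+2), (2:ℝ)^(-(j:ℤ)) * ((m:ℝ)+1)) := by
      rw [show 4*m+5 = (4*m+4) + 1 from rfl, vertex_succ, h4,
        show spiralDir (4*m+4) = ((1:ℝ), (0:ℝ)) from by
          simp [spiralDir, show (4*m+4)%4 = 0 from by omega],
        show (4*m+4)/2 = 2*m+2 from by omega]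
      simp only [Prod.smul_mk, Prod.mk_add_mk, Prod.mk.injEq, smul_eq_mul]
      push_cast
      constructor <;> ring
    have e2 : spiralVertex j (4*m+6)
        = ((2:ℝ)^(-(j:ℤ)) * ((m:ℝ)+2), (2:ℝ)^(-(j:ℤ)) * (-((m:ℝ)+2))) := by
      rw [show 4*m+6 = (4*m+5) + 1 from rfl, vertex_succ, e1,
        show spiralDir (4*m+5) = ((0:ℝ), (-1:ℝ)) from by
          simp [spiralDir, show (4*m+5)%4 = 1 from by omega],
        show (4*m+5)/2 = 2*m+2 from by omega]
      simp only [Prod.smul_mk, Prod.mk_add_mk, Prod.mk.injEq, smul_eq_mul]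
      push_cast
      constructor <;> ring
    have e3 : spiralVertex j (4*m+7)
        = ((2:ℝ)^(-(j:ℤ)) * (-((m:ℝ)+2)), (2:ℝ)^(-(j:ℤ)) * (-((m:ℝ)+2))) := by
      rw [show 4*m+7 = (4*m+6) + 1 from rfl, vertex_succ, e2,
        show spiralDir (4*m+6) = ((-1:ℝ), (0:ℝ)) from by
          simp [spiralDir, show (4*m+6)%4 = 2 from by omega],
        show (4*m+6)/2 = 2*m+3 from by omega]
      simp only [Prod.smul_mk, Prod.mk_add_mk, Prod.mk.injEq, smul_eq_mul]
      push_cast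
      constructor <;> ring
    have e4 : spiralVertex j (4*m+8)
        = ((2:ℝ)^(-(j:ℤ)) * (-((m:ℝ)+2)), (2:ℝ)^(-(j:ℤ)) * ((m:ℝ)+2)) := by
      rw [show 4*m+8 = (4*m+7) + 1 from rfl, vertex_succ, e3,
        show spiralDir (4*m+7) = ((0:ℝ), (1:ℝ)) from by
          simp [spiralDir, show (4*m+7)%4 = 3 from by omega],
        show (4*m+7)/2 = 2*m+3 from by omega]
      simp only [Prod.smul_mk, Prod.mk_add_mk, Prod.mk.injEq, smul_eq_mul]
      push_cast
      constructor <;> ring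
    refine ⟨?_, ?_, ?_, ?_, ?_⟩
    · rw [show 4*(m+1) = 4*m+4 from by ring, h4]; push_cast; ring_nf
    · rw [show 4*(m+1)+1 = 4*m+5 from by ring, e1]; push_cast; ring_nf
    · rw [show 4*(m+1)+2 = 4*m+6 from by ring, e2]; push_cast; ring_nf
    · rw [show 4*(m+1)+3 = 4*m+7 from by ring, e3]; push_cast; ring_nf
    · rw [show 4*(m+1)+4 = 4*m+8 from by ring, e4]; push_cast; ring_nf

private lemma mem_seg_h {x0 x1 y x : ℝ} (h0 : x0 ≤ x) (h1 : x ≤ x1) :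
    ((x, y) : ℝ × ℝ) ∈ segment ℝ (x0, y) (x1, y) := by
  have hx : x ∈ segment ℝ x0 x1 := by
    rw [segment_eq_Icc (h0.trans h1)]; exact ⟨h0, h1⟩
  obtain ⟨a, b, ha, hb, hab, hs⟩ := hx
  refine ⟨a, b, ha, hb, hab, ?_⟩
  simp only [Prod.smul_mk, Prod.mk_add_mk, Prod.mk.injEq, smul_eq_mul] at *
  exact ⟨hs, by linear_combination y * hab⟩

private lemma mem_seg_v {y0 y1 x y : ℝ} (h0 : y0 ≤ y) (h1 : y ≤ y1) :
    ((x, y) : ℝ × ℝ) ∈ segment ℝ (x, y0) (x, y1) := by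
  have hy : y ∈ segment ℝ y0 y1 := by
    rw [segment_eq_Icc (h0.trans h1)]; exact ⟨h0, h1⟩
  obtain ⟨a, b, ha, hb, hab, hs⟩ := hy
  refine ⟨a, b, ha, hb, hab, ?_⟩
  simp only [Prod.smul_mk, Prod.mk_add_mk, Prod.mk.injEq, smul_eq_mul] at *
  exact ⟨by linear_combination x * hab, hs⟩

private lemma lattice_mem (k j : ℕ) (a b : ℤ) (hak : |a| ≤ (k:ℤ)) (hbk : |b| ≤ (k:ℤ)) :
    (((2:ℝ)^(-(j:ℤ)) * (a:ℝ), (2:ℝ)^(-(j:ℤ)) * (b:ℝ)) : ℝ × ℝ) ∈ spiralSet k j := by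
  set ε : ℝ := (2:ℝ)^(-(j:ℤ)) with hεdef
  have hε : (0:ℝ) < ε := by positivity
  have hA := abs_le.mp hak
  have hB := abs_le.mp hbk
  rcases le_or_gt |a| |b| with hab | hab
  · rcases le_or_gt 0 b with hb | hb
    · -- East segment n = 4 * b.toNat
      have hab' := abs_le.mp (hab.trans_eq (abs_of_nonneg hb))
      set m : ℕ := b.toNat with hm
      have hmb : (m : ℤ) = b := Int.toNat_of_nonneg hb
      have hmbr : (m : ℝ) = (b : ℝ) := by exact_mod_cast hmb
      refine Set.mem_iUnion₂.mpr ⟨4*m, Finset.mem_range.mpr (by omega), ?_⟩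
      rw [(vertex_four j m).1, (vertex_four j m).2.1, hmbr]
      have h1 : -(b:ℝ) ≤ (a:ℝ) := by exact_mod_cast hab'.1
      have h2 : (a:ℝ) ≤ (b:ℝ) + 1 := by exact_mod_cast (by omega : a ≤ b + 1)
      exact mem_seg_h (by nlinarith) (by nlinarith)
    · -- West segment n = 4 * m + 2 with m + 1 = -b
      have hab' := abs_le.mp (hab.trans_eq (abs_of_neg hb))
      set m : ℕ := (-b-1).toNat with hm
      have hmb : (m : ℤ) = -b-1 := Int.toNat_of_nonneg (by omega)
      have hmbr : (m : ℝ) + 1 = -(b : ℝ) := by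
        have : ((m:ℤ):ℝ) = ((-b-1 : ℤ):ℝ) := by rw [hmb]
        push_cast at this ⊢; linarith
      refine Set.mem_iUnion₂.mpr ⟨4*m+2, Finset.mem_range.mpr (by omega), ?_⟩
      rw [(vertex_four j m).2.2.1, (vertex_four j m).2.2.2.1, segment_symm, hmbr, neg_neg]
      have h1 : (b:ℝ) ≤ (a:ℝ) := by exact_mod_cast (by omega : b ≤ a)
      have h2 : (a:ℝ) ≤ -(b:ℝ) := by exact_mod_cast (by omega : a ≤ -b)
      exact mem_seg_h (by nlinarith) (by nlinarith)
  · rcases lt_or_ge a 0 with haneg | hapos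
    · -- North segment n = 4 * m + 3 with m + 1 = -a
      have hab' := abs_lt.mp (hab.trans_eq (abs_of_neg haneg))
      set m : ℕ := (-a-1).toNat with hm
      have hmb : (m : ℤ) = -a-1 := Int.toNat_of_nonneg (by omega)
      have hmbr : (m : ℝ) + 1 = -(a : ℝ) := by
        have : ((m:ℤ):ℝ) = ((-a-1 : ℤ):ℝ) := by rw [hmb]
        push_cast at this ⊢; linarith
      refine Set.mem_iUnion₂.mpr ⟨4*m+3, Finset.mem_range.mpr (by omega), ?_⟩
      rw [(vertex_four j m).2.2.2.1, (vertex_four j m).2.2.2.2, hmbr, neg_neg]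
      have h1 : (a:ℝ) ≤ (b:ℝ) := by exact_mod_cast (by omega : a ≤ b)
      have h2 : (b:ℝ) ≤ -(a:ℝ) := by exact_mod_cast (by omega : b ≤ -a)
      exact mem_seg_v (by nlinarith) (by nlinarith)
    · -- South segment n = 4 * m + 1 with m + 1 = a
      have hapos' : 0 < a := by
        rcases lt_or_eq_of_le hapos with h | h
        · exact h
        · exfalso; rw [← h] at hab; simp at hab; linarith [abs_nonneg b]
      have hab' := abs_lt.mp (hab.trans_eq (abs_of_pos hapos'))
      set m : ℕ := (a-1).toNat with hm
      have hmb : (m : ℤ) = a-1 := Int.toNat_of_nonneg (by omega)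
      have hmbr : (m : ℝ) + 1 = (a : ℝ) := by
        have : ((m:ℤ):ℝ) = ((a-1 : ℤ):ℝ) := by rw [hmb]
        push_cast at this ⊢; linarith
      refine Set.mem_iUnion₂.mpr ⟨4*m+1, Finset.mem_range.mpr (by omega), ?_⟩
      rw [(vertex_four j m).2.1, (vertex_four j m).2.2.1, segment_symm, hmbr]
      have h1 : -(a:ℝ) ≤ (b:ℝ) := by exact_mod_cast (by omega : -a ≤ b)
      have h2 : (b:ℝ) ≤ (a:ℝ) - 1 := by exact_mod_cast (by omega : b ≤ a - 1)
      exact mem_seg_v (by nlinarith) (by nlinarith [hmbr])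

/-- Every point of the axis-aligned square of side 2k·2^{-j} centered at the origin is at
(Euclidean) distance less than 2^{-j} from some point of the spiral S(k,j). -/
theorem spiral_dense_in_square (k j : ℕ) (hk : 1 ≤ k) (hj : 1 ≤ j) (p : ℝ × ℝ)
    (hp1 : |p.1| ≤ (k : ℝ) * (2:ℝ) ^ (-(j:ℤ))) (hp2 : |p.2| ≤ (k : ℝ) * (2:ℝ) ^ (-(j:ℤ))) :
    ∃ q ∈ spiralSet k j,
      Real.sqrt ((p.1 - q.1) ^ 2 + (p.2 - q.2) ^ 2) < (2:ℝ) ^ (-(j:ℤ)) := by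
  set ε : ℝ := (2:ℝ)^(-(j:ℤ)) with hεdef
  have hε : (0:ℝ) < ε := by positivity
  set a : ℤ := round (p.1 / ε) with ha
  set b : ℤ := round (p.2 / ε) with hb
  have key : ∀ x : ℝ, |x| ≤ (k:ℝ) * ε →
      |x - (round (x / ε) : ℤ) * ε| ≤ ε / 2 ∧ |round (x / ε)| ≤ (k:ℤ) := by
    intro x hx
    have h1 : |x / ε - round (x / ε)| ≤ 1 / 2 := abs_sub_round _
    constructor
    · have e : x - (round (x / ε) : ℤ) * ε = (x / ε - round (x / ε)) * ε := by
        field_simp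
      rw [e, abs_mul, abs_of_pos hε]
      nlinarith
    · have h2 : |x / ε| ≤ (k:ℝ) := by
        rw [abs_div, abs_of_pos hε, div_le_iff₀ hε]
        exact hx
      have h3 := abs_sub_abs_le_abs_sub ((round (x / ε) : ℝ)) (x / ε)
      rw [abs_sub_comm] at h3
      have h4 : ((|round (x / ε)| : ℤ) : ℝ) < ((k:ℤ):ℝ) + 1 := by
        push_cast
        linarith
      have h5 : |round (x / ε)| < (k:ℤ) + 1 := by exact_mod_cast h4
      omega
  obtain ⟨ha1, hak⟩ := key p.1 hp1
  obtain ⟨hb1, hbk⟩ := key p.2 hp2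
  refine ⟨(ε * (a:ℝ), ε * (b:ℝ)), lattice_mem k j a b hak hbk, ?_⟩
  rw [Real.sqrt_lt' hε]
  have e1 : p.1 - ε * (a:ℝ) = p.1 - (a:ℝ) * ε := by ring
  have e2 : p.2 - ε * (b:ℝ) = p.2 - (b:ℝ) * ε := by ring
  simp only [e1, e2]
  nlinarith [sq_abs (p.1 - (a:ℝ)*ε), sq_abs (p.2 - (b:ℝ)*ε),
    abs_nonneg (p.1 - (a:ℝ)*ε), abs_nonneg (p.2 - (b:ℝ)*ε), sq_nonneg ε, ha1, hb1]
end
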